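/- arXiv:nlin/0108010 — 3 statements merged into one kernel-verified Lean document; each statement's English description precedes it below -/
import Mathlib

section
/- Let α ∈ ℂ and let (a_n)_{n≥0} be defined by a_0 = 1 and a_{n+1} = (3n+1)(3n+2)·a_n − 2α²·Σ_{k+l+m=n} a_k·a_l·a_m. For N ≥ 1 define the truncated series y⁽ᴺ⁾(x) = α·Σ_{n=0}^{N−1} a_n·x^{−3n−1} for x ≠ 0. Then y⁽ᴺ⁾ formally solves the second Painlevé equation up to order x^{−3N}: there is a constant c_N such that |(y⁽ᴺ⁾)''(x) − 2·y⁽ᴺ⁾(x)³ − x·y⁽ᴺ⁾(x) + α| ≤ c_N·|x|^{−3N} for all |x| ≥ 1. -/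
open Finset Polynomial


/-- The truncated asymptotic series `y⁽ᴺ⁾(x) = α·Σ_{n=0}^{N−1} a_n·x^{−3n−1}`. -/
noncomputable def truncatedP2Series (α : ℂ) (a : ℕ → ℂ) (N : ℕ) (x : ℂ) : ℂ :=
  α * ∑ n ∈ Finset.range N, a n * x ^ (-(3 * (n : ℤ)) - 1)

/-- the truncated series `y⁽ᴺ⁾` formally solves the second Painlevé
equation `y'' = 2y³ + xy − α` up to order `x^{−3N}`, where the coefficients satisfy
`a₀ = 1`, `a_{n+1} = (3n+1)(3n+2)·a_n − 2α²·Σ_{k+l+m=n} a_k·a_l·a_m`. -/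
theorem truncatedP2Series_formal_solution (α : ℂ)
    (a : ℕ → ℂ) (ha0 : a 0 = 1)
    (harec : ∀ n : ℕ, a (n + 1) =
      (3 * (n : ℂ) + 1) * (3 * (n : ℂ) + 2) * a n -
        2 * α ^ 2 * ∑ k ∈ Finset.range (n + 1), ∑ l ∈ Finset.range (n + 1 - k),
          a k * a l * a (n - k - l))
    (N : ℕ) (hN : 1 ≤ N) :
    ∃ c : ℝ, ∀ x : ℂ, 1 ≤ ‖x‖ →
      ‖deriv (deriv (truncatedP2Series α a N)) x -
          2 * (truncatedP2Series α a N x) ^ 3 -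
          x * truncatedP2Series α a N x + α‖ ≤
        c * ‖x‖ ^ (-(3 * (N : ℤ))) := by
  -- polynomials
  set P : Polynomial ℂ := ∑ n ∈ range N, monomial n (a n) with hP
  set Q : Polynomial ℂ := ∑ n ∈ range N,
      monomial n ((3 * (n : ℂ) + 1) * (3 * (n : ℂ) + 2) * a n) with hQdef
  set F : Polynomial ℂ := X * Q - C (2 * α ^ 2) * (X * P ^ 3) - P + 1 with hF
  have hPc : ∀ i, P.coeff i = if i < N then a i else 0 := by
    intro i
    rw [hP, finset_sum_coeff]
    simp only [coeff_monomial]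
    rw [Finset.sum_ite_eq' (range N) i a]
    simp [Finset.mem_range]
  have hQc : ∀ i, Q.coeff i =
      if i < N then (3 * (i : ℂ) + 1) * (3 * (i : ℂ) + 2) * a i else 0 := by
    intro i
    rw [hQdef, finset_sum_coeff]
    simp only [coeff_monomial]
    rw [Finset.sum_ite_eq' (range N) i]
    simp [Finset.mem_range]
  have hP3 : ∀ i, i < N → (P ^ 3).coeff i =
      ∑ k ∈ range (i + 1), ∑ l ∈ range (i + 1 - k), a k * a l * a (i - k - l) := by
    intro i hi
    have h3 : P ^ 3 = P * (P * P) := by ring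
    rw [h3, coeff_mul, Finset.Nat.sum_antidiagonal_eq_sum_range_succ_mk]
    refine Finset.sum_congr rfl ?_
    intro k hk
    rw [Finset.mem_range] at hk
    have hk' : k ≤ i := Nat.lt_succ_iff.mp hk
    rw [coeff_mul, Finset.Nat.sum_antidiagonal_eq_sum_range_succ_mk, Finset.mul_sum]
    dsimp only
    rw [show (i - k).succ = i + 1 - k by omega]
    refine Finset.sum_congr rfl ?_
    intro l hl
    rw [Finset.mem_range] at hl
    rw [hPc, hPc, hPc, if_pos (by omega), if_pos (by omega), if_pos (by omega)]
    ring
  have hcoeff : ∀ d, d < N → F.coeff d = 0 := by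
    intro d hd
    rw [hF]
    simp only [coeff_add, coeff_sub, coeff_C_mul]
    match d with
    | 0 =>
      rw [mul_coeff_zero, mul_coeff_zero]
      simp [coeff_X_zero, hPc, ha0, hd, coeff_one]
    | (i + 1) =>
      rw [coeff_X_mul, coeff_X_mul, hQc, hPc, hP3 i (by omega),
        if_pos (by omega), if_pos hd, coeff_one, if_neg (by omega), harec i]
      ring
  obtain ⟨G, hG⟩ : (X : Polynomial ℂ) ^ N ∣ F := X_pow_dvd_iff.mpr hcoeff
  refine ⟨‖α‖ * ∑ j ∈ range (G.natDegree + 1), ‖G.coeff j‖, ?_⟩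
  intro x hx
  have hx0 : x ≠ 0 := by
    intro h; rw [h] at hx; simp at hx; linarith
  -- derivative computations
  have hd1 : ∀ y : ℂ, y ≠ 0 → HasDerivAt (truncatedP2Series α a N)
      (α * ∑ n ∈ range N, a n *
        (((-(3 * (n : ℤ)) - 1 : ℤ) : ℂ) * y ^ (-(3 * (n : ℤ)) - 1 - 1))) y := by
    intro y hy
    have : HasDerivAt (fun x : ℂ => ∑ n ∈ range N, a n * x ^ (-(3 * (n : ℤ)) - 1))
        (∑ n ∈ range N, a n *
          (((-(3 * (n : ℤ)) - 1 : ℤ) : ℂ) * y ^ (-(3 * (n : ℤ)) - 1 - 1))) y :=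
      HasDerivAt.fun_sum fun n _ =>
        (hasDerivAt_zpow (-(3 * (n : ℤ)) - 1) y (Or.inl hy)).const_mul (a n)
    exact this.const_mul α
  have hd2 : deriv (deriv (truncatedP2Series α a N)) x =
      α * ∑ n ∈ range N, a n * (((-(3 * (n : ℤ)) - 1 : ℤ) : ℂ) *
        (((-(3 * (n : ℤ)) - 1 - 1 : ℤ) : ℂ) * x ^ (-(3 * (n : ℤ)) - 1 - 1 - 1))) := by
    have hev : deriv (truncatedP2Series α a N) =ᶠ[nhds x]
        (fun y => α * ∑ n ∈ range N, a n *
          (((-(3 * (n : ℤ)) - 1 : ℤ) : ℂ) * y ^ (-(3 * (n : ℤ)) - 1 - 1))) := by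
      filter_upwards [isOpen_compl_singleton.mem_nhds (by simpa using hx0)] with y hy
      exact (hd1 y hy).deriv
    rw [hev.deriv_eq]
    have : HasDerivAt (fun y : ℂ => α * ∑ n ∈ range N, a n *
        (((-(3 * (n : ℤ)) - 1 : ℤ) : ℂ) * y ^ (-(3 * (n : ℤ)) - 1 - 1)))
        (α * ∑ n ∈ range N, a n * (((-(3 * (n : ℤ)) - 1 : ℤ) : ℂ) *
          (((-(3 * (n : ℤ)) - 1 - 1 : ℤ) : ℂ) * x ^ (-(3 * (n : ℤ)) - 1 - 1 - 1)))) x := by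
      refine HasDerivAt.const_mul α (HasDerivAt.fun_sum fun n _ => ?_)
      exact ((hasDerivAt_zpow (-(3 * (n : ℤ)) - 1 - 1) x (Or.inl hx0)).const_mul
        ((-(3 * (n : ℤ)) - 1 : ℤ) : ℂ)).const_mul (a n)
    exact this.deriv
  set v : ℂ := (x⁻¹) ^ 3 with hv
  -- value of the series
  have hsum1 : ∑ n ∈ range N, a n * x ^ (-(3 * (n : ℤ)) - 1) = x⁻¹ * P.eval v := by
    rw [hP, eval_finset_sum]
    simp only [eval_monomial]
    rw [Finset.mul_sum]
    refine Finset.sum_congr rfl ?_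
    intro n _
    have h1 : (-(3 * (n : ℤ)) - 1) = -((3 * n + 1 : ℕ) : ℤ) := by push_cast; ring
    rw [h1, zpow_neg, zpow_natCast, ← inv_pow, hv]
    rw [show 3 * n + 1 = 1 + 3 * n by ring, pow_add, pow_mul]
    ring
  have hfx : truncatedP2Series α a N x = α * (x⁻¹ * P.eval v) := by
    rw [truncatedP2Series, hsum1]
  -- second derivative as polynomial eval
  have hsum2 : ∑ n ∈ range N, a n * (((-(3 * (n : ℤ)) - 1 : ℤ) : ℂ) *
      (((-(3 * (n : ℤ)) - 1 - 1 : ℤ) : ℂ) * x ^ (-(3 * (n : ℤ)) - 1 - 1 - 1))) =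
      v * Q.eval v := by
    rw [hQdef, eval_finset_sum]
    simp only [eval_monomial]
    rw [Finset.mul_sum]
    refine Finset.sum_congr rfl ?_
    intro n _
    have h1 : (-(3 * (n : ℤ)) - 1 - 1 - 1) = -((3 * n + 3 : ℕ) : ℤ) := by push_cast; ring
    rw [h1, zpow_neg, zpow_natCast, ← inv_pow, hv]
    rw [show 3 * n + 3 = 3 + 3 * n by ring, pow_add, pow_mul]
    push_cast
    ring
  have hd2' : deriv (deriv (truncatedP2Series α a N)) x = α * (v * Q.eval v) := by
    rw [hd2, hsum2]
  have hFeval : F.eval v = v * Q.eval v - 2 * α ^ 2 * (v * (P.eval v) ^ 3)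
      - P.eval v + 1 := by
    rw [hF]
    simp [eval_mul, eval_pow]
  have key : deriv (deriv (truncatedP2Series α a N)) x -
      2 * (truncatedP2Series α a N x) ^ 3 - x * truncatedP2Series α a N x + α =
      α * F.eval v := by
    rw [hd2', hfx, hFeval, hv]
    have hxi : x * x⁻¹ = 1 := mul_inv_cancel₀ hx0
    linear_combination (-(α * Polynomial.eval (x⁻¹ ^ 3) P)) * hxi
  rw [key, hG]
  rw [eval_mul, eval_pow, eval_X]
  rw [norm_mul, norm_mul, norm_pow]
  have habsv : ‖v‖ = (‖x‖⁻¹) ^ 3 := by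
    rw [hv, norm_pow, norm_inv]
  have hv1 : ‖v‖ ≤ 1 := by
    rw [habsv]
    exact pow_le_one₀ (by positivity) (inv_le_one_of_one_le₀ hx)
  have hvpow : ‖v‖ ^ N = ‖x‖ ^ (-(3 * (N : ℤ))) := by
    rw [habsv, ← pow_mul, inv_pow, ← zpow_natCast ‖x‖ (3 * N), ← zpow_neg]
    norm_cast
  have hGb : ‖G.eval v‖ ≤ ∑ j ∈ range (G.natDegree + 1),
      ‖G.coeff j‖ := by
    rw [eval_eq_sum_range]
    refine le_trans (norm_sum_le _ _) ?_
    refine Finset.sum_le_sum ?_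
    intro i _
    rw [norm_mul, norm_pow]
    calc ‖G.coeff i‖ * ‖v‖ ^ i
        ≤ ‖G.coeff i‖ * 1 := by
          exact mul_le_mul_of_nonneg_left (pow_le_one₀ (by positivity) hv1)
            (by positivity)
      _ = ‖G.coeff i‖ := mul_one _
  calc ‖α‖ * (‖v‖ ^ N * ‖G.eval v‖)
      = (‖α‖ * ‖G.eval v‖) * ‖v‖ ^ N := by ring
    _ ≤ (‖α‖ * ∑ j ∈ range (G.natDegree + 1), ‖G.coeff j‖) *
        ‖v‖ ^ N := by
        apply mul_le_mul_of_nonneg_right _ (by positivity)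
        exact mul_le_mul_of_nonneg_left hGb (by positivity)
    _ = _ := by rw [hvpow]
end

section
/- Let α ∈ ℤ with α ≠ 0, and let (a_N)_{N≥0} be defined by a_0 = 1 and a_{N+1} = (3N+1)(3N+2)·a_N − 2α²·Σ_{k+l+m=N} a_k·a_l·a_m. Then the sequence grows at most exponentially: there exists C > 1 such that |a_N| ≤ C^N for all N ≥ 0. -/
set_option maxHeartbeats 2000000
open PowerSeries
namespace PW
noncomputable section
local notation "dd" => (d⁄dX ℂ)

lemma dd_ofNat (n : ℕ) [n.AtLeastTwo] : dd (OfNat.ofNat n : ℂ⟦X⟧) = 0 := by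
  rw [← Nat.cast_ofNat]; exact Derivation.map_natCast _ n

lemma dd_two : dd (2 : ℂ⟦X⟧) = 0 := dd_ofNat 2
lemma dd_three : dd (3 : ℂ⟦X⟧) = 0 := dd_ofNat 3
lemma dd_six : dd (6 : ℂ⟦X⟧) = 0 := dd_ofNat 6

def Pii (β : ℂ) (g : ℂ⟦X⟧) : Prop :=
  g = 1 + 9*(X^3 * dd (dd g)) + 18*(X^2 * dd g) + 2*(X*g) - 2*(C β * (X * g^3))

def Wser (α : ℂ) (g : ℂ⟦X⟧) : ℂ⟦X⟧ :=
  1 + 2*((C α) * (X*g)) + 6*((C α) * (X^2 * dd g)) + 2*((C α)^2 * (X*g^2))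

def bTrans (α : ℂ) (g : ℂ⟦X⟧) : ℂ⟦X⟧ :=
  C (α+1)⁻¹ * ((2*(C α)+1) * (Wser α g)⁻¹ - (C α) * g)

lemma constantCoeff_Wser (α : ℂ) (g : ℂ⟦X⟧) : constantCoeff (Wser α g) = 1 := by
  simp [Wser]

lemma backlund (α : ℂ) (hα : α + 1 ≠ 0) (g : ℂ⟦X⟧) (hg : Pii (α^2) g) :
    Pii ((α+1)^2) (bTrans α g) := by
  have hW0 := constantCoeff_Wser α g
  have hWne : (Wser α g) ≠ 0 := by
    intro h; rw [h, map_zero] at hW0; exact one_ne_zero hW0.symm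
  rw [Pii] at hg
  set A := C α with hA
  set B := C (α+1)⁻¹ with hB
  set V := (Wser α g)⁻¹ with hV
  have hE : g = 1 + 9*(X^3 * dd (dd g)) + 18*(X^2 * dd g) + 2*(X*g) - 2*(A^2*(X * g^3)) := by
    rw [map_pow] at hg; exact hg
  have hWeq : Wser α g = 1 + 2*(A*(X*g)) + 6*(A*(X^2 * dd g)) + 2*(A^2*(X*g^2)) := by
    rw [Wser, hA]
  have hWV : (1 + 2*(A*(X*g)) + 6*(A*(X^2 * dd g)) + 2*(A^2*(X*g^2))) * V = 1 := by
    rw [← hWeq, hV]; exact PowerSeries.mul_inv_cancel _ (by rw [hW0]; exact one_ne_zero)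
  have hInv : (A + 1) * B = 1 := by
    rw [hA, hB, show (C α + 1 : ℂ⟦X⟧) = C (α+1) by simp, ← map_mul,
      mul_inv_cancel₀ hα, map_one]
  have hdW : dd (Wser α g) = 2*(A*(g + X * dd g)) + 6*(A*(2*(X*dd g) + X^2 * dd (dd g)))
      + 2*(A^2*(g^2 + 2*(X*(g*dd g)))) := by
    rw [hWeq]
    simp only [map_add, Derivation.leibniz, Derivation.leibniz_pow, derivative_X,
      derivative_C, Derivation.map_one_eq_zero, dd_two, dd_six, hA, smul_eq_mul]
    ring
  have hR1 : 3*(X * dd (Wser α g)) =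
      (1 + 2*(A*(X*g)) + 6*(A*(X^2 * dd g)) + 2*(A^2*(X*g^2)))
      + 2*(A*(g*(1 + 2*(A*(X*g)) + 6*(A*(X^2 * dd g)) + 2*(A^2*(X*g^2))))) - (2*A+1) := by
    rw [hdW]; linear_combination (-2*A) * hE
  have hdV : dd V = -V^2 * dd (Wser α g) := by
    rw [hV]; exact derivative_inv' _
  have h1 : 3*(X * dd V) = -(V + 2*(A*(g*V))) + (2*A+1)*V^2 := by
    rw [hdV]; linear_combination (-(V^2)) * hR1 + (-V + (-2)*g*V*A) * hWV
  have h2 : 3*(dd V) + 3*(X * dd (dd V)) =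
      -(dd V) - 2*(A*(dd g*V)) - 2*(A*(g*dd V)) + 2*((2*A+1)*(V*dd V)) := by
    have h1' := congrArg (d⁄dX ℂ) h1
    simp only [map_add, map_neg, Derivation.leibniz, Derivation.leibniz_pow, derivative_X,
      derivative_C, Derivation.map_one_eq_zero, dd_two, dd_three, hA, smul_eq_mul,
      map_ofNat, map_mul] at h1'
    linear_combination h1'
  have hbt : bTrans α g = B * ((2*A+1) * V - A * g) := by
    rw [bTrans, hA, hB, hV]
  have hD1 : dd (B * ((2*A+1) * V - A * g)) = B * ((2*A+1) * dd V - A * dd g) := by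
    simp only [Derivation.leibniz, map_sub, map_add, derivative_C, dd_two, hA, hB,
      Derivation.map_one_eq_zero, smul_eq_mul]
    ring
  have hD2 : dd (dd (B * ((2*A+1) * V - A * g))) = B * ((2*A+1) * dd (dd V) - A * dd (dd g)) := by
    rw [hD1]
    simp only [Derivation.leibniz, map_sub, map_add, derivative_C, dd_two, hA, hB,
      Derivation.map_one_eq_zero, smul_eq_mul]
    ring
  rw [Pii, hbt, hD2, show dd (B * ((2*A+1) * V - A * g)) = B * ((2*A+1) * dd V - A * dd g) from hD1,
    show C ((α+1)^2) = (A+1)^2 by rw [map_pow, map_add, map_one, hA]]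
  have hfac : ((A+1)^3 * (1 + 2*(A*(X*g)) + 6*(A*(X^2 * dd g)) + 2*(A^2*(X*g^2))) : ℂ⟦X⟧) ≠ 0 := by
    apply mul_ne_zero
    · apply pow_ne_zero
      intro h
      have := congrArg (constantCoeff) h
      simp [hA] at this
      exact hα this
    · rw [← hWeq]; exact hWne
  apply mul_left_cancel₀ hfac
  linear_combination ((-1)*A + (-2)*A^2 + (-1)*A^3 + (-2)*(X:ℂ⟦X⟧)*g*A^2 + (-4)*(X:ℂ⟦X⟧)*g*A^3 + (-2)*(X:ℂ⟦X⟧)*g*A^4 + (-2)*(X:ℂ⟦X⟧)*g^2*A^3 + (-4)*(X:ℂ⟦X⟧)*g^2*A^4 + (-2)*(X:ℂ⟦X⟧)*g^2*A^5 + (-6)*(X:ℂ⟦X⟧)^2*(dd g)*A^2 + (-12)*(X:ℂ⟦X⟧)^2*(dd g)*A^3 + (-6)*(X:ℂ⟦X⟧)^2*(dd g)*A^4) * hE + ((1) + (4)*A + (5)*A^2 + (2)*A^3 + (2)*(X:ℂ⟦X⟧)*g*A + (8)*(X:ℂ⟦X⟧)*g*A^2 + (10)*(X:ℂ⟦X⟧)*g*A^3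 + (4)*(X:ℂ⟦X⟧)*g*A^4 + (2)*(X:ℂ⟦X⟧)*g^2*A^2 + (8)*(X:ℂ⟦X⟧)*g^2*A^3 + (10)*(X:ℂ⟦X⟧)*g^2*A^4 + (4)*(X:ℂ⟦X⟧)*g^2*A^5 + (6)*(X:ℂ⟦X⟧)^2*(dd g)*A + (24)*(X:ℂ⟦X⟧)^2*(dd g)*A^2 + (30)*(X:ℂ⟦X⟧)^2*(dd g)*A^3 + (12)*(X:ℂ⟦X⟧)^2*(dd g)*A^4) * hWV + ((1)*V + (4)*V*A + (5)*V*A^2 + (2)*V*A^3 + (-1)*g*A + (-2)*g*A^2 + (-1)*g*A^3 + (-2)*(X:ℂ⟦X⟧)*V + (-8)*(X:ℂ⟦X⟧)*V*A + (-10)*(X:ℂ⟦X⟧)*V*A^2 + (-4)*(X:ℂ⟦X⟧)*V*A^3 + (2)*(X:ℂ⟦X⟧)*V^3 + (2)*(X:ℂ⟦X⟧)*V^3*B + (2)*(X:ℂ⟦X⟧)*V^3*B^2 + (16)*(X:ℂ⟦X⟧)*V^3*A + (18)*(X:ℂ⟦X⟧)*V^3*A*B + (20)*(X:ℂ⟦X⟧)*V^3*A*B^2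 + (50)*(X:ℂ⟦X⟧)*V^3*A^2 + (66)*(X:ℂ⟦X⟧)*V^3*A^2*B + (84)*(X:ℂ⟦X⟧)*V^3*A^2*B^2 + (76)*(X:ℂ⟦X⟧)*V^3*A^3 + (126)*(X:ℂ⟦X⟧)*V^3*A^3*B + (192)*(X:ℂ⟦X⟧)*V^3*A^3*B^2 + (56)*(X:ℂ⟦X⟧)*V^3*A^4 + (132)*(X:ℂ⟦X⟧)*V^3*A^4*B + (258)*(X:ℂ⟦X⟧)*V^3*A^4*B^2 + (16)*(X:ℂ⟦X⟧)*V^3*A^5 + (72)*(X:ℂ⟦X⟧)*V^3*A^5*B + (204)*(X:ℂ⟦X⟧)*V^3*A^5*B^2 + (16)*(X:ℂ⟦X⟧)*V^3*A^6*B + (88)*(X:ℂ⟦X⟧)*V^3*A^6*B^2 + (16)*(X:ℂ⟦X⟧)*V^3*A^7*B^2 + (2)*(X:ℂ⟦X⟧)*g*A + (4)*(X:ℂ⟦X⟧)*g*A^2 + (2)*(X:ℂ⟦X⟧)*g*A^3 + (2)*(X:ℂ⟦X⟧)*g*V*A + (8)*(X:ℂ⟦X⟧)*g*V*A^2 + (10)*(X:ℂ⟦X⟧)*g*V*A^3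 + (4)*(X:ℂ⟦X⟧)*g*V*A^4 + (-6)*(X:ℂ⟦X⟧)*g*V^2*A + (-6)*(X:ℂ⟦X⟧)*g*V^2*A*B + (-6)*(X:ℂ⟦X⟧)*g*V^2*A*B^2 + (-36)*(X:ℂ⟦X⟧)*g*V^2*A^2 + (-42)*(X:ℂ⟦X⟧)*g*V^2*A^2*B + (-48)*(X:ℂ⟦X⟧)*g*V^2*A^2*B^2 + (-78)*(X:ℂ⟦X⟧)*g*V^2*A^3 + (-114)*(X:ℂ⟦X⟧)*g*V^2*A^3*B + (-156)*(X:ℂ⟦X⟧)*g*V^2*A^3*B^2 + (-72)*(X:ℂ⟦X⟧)*g*V^2*A^4 + (-150)*(X:ℂ⟦X⟧)*g*V^2*A^4*B + (-264)*(X:ℂ⟦X⟧)*g*V^2*A^4*B^2 + (-24)*(X:ℂ⟦X⟧)*g*V^2*A^5 + (-96)*(X:ℂ⟦X⟧)*g*V^2*A^5*B + (-246)*(X:ℂ⟦X⟧)*g*V^2*A^5*B^2 + (-24)*(X:ℂ⟦X⟧)*g*V^2*A^6*B + (-120)*(X:ℂ⟦X⟧)*g*V^2*A^6*B^2 + (-24)*(X:ℂ⟦X⟧)*g*V^2*A^7*B^2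 + (-2)*(X:ℂ⟦X⟧)*g^2*A^2 + (-4)*(X:ℂ⟦X⟧)*g^2*A^3 + (-2)*(X:ℂ⟦X⟧)*g^2*A^4 + (8)*(X:ℂ⟦X⟧)*g^2*V*A^2 + (6)*(X:ℂ⟦X⟧)*g^2*V*A^2*B + (6)*(X:ℂ⟦X⟧)*g^2*V*A^2*B^2 + (32)*(X:ℂ⟦X⟧)*g^2*V*A^3 + (30)*(X:ℂ⟦X⟧)*g^2*V*A^3*B + (36)*(X:ℂ⟦X⟧)*g^2*V*A^3*B^2 + (40)*(X:ℂ⟦X⟧)*g^2*V*A^4 + (54)*(X:ℂ⟦X⟧)*g^2*V*A^4*B + (84)*(X:ℂ⟦X⟧)*g^2*V*A^4*B^2 + (16)*(X:ℂ⟦X⟧)*g^2*V*A^5 + (42)*(X:ℂ⟦X⟧)*g^2*V*A^5*B + (96)*(X:ℂ⟦X⟧)*g^2*V*A^5*B^2 + (12)*(X:ℂ⟦X⟧)*g^2*V*A^6*B + (54)*(X:ℂ⟦X⟧)*g^2*V*A^6*B^2 + (12)*(X:ℂ⟦X⟧)*g^2*V*A^7*B^2 + (-4)*(X:ℂ⟦X⟧)*g^3*A^3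 + (-2)*(X:ℂ⟦X⟧)*g^3*A^3*B + (-2)*(X:ℂ⟦X⟧)*g^3*A^3*B^2 + (-8)*(X:ℂ⟦X⟧)*g^3*A^4 + (-6)*(X:ℂ⟦X⟧)*g^3*A^4*B + (-8)*(X:ℂ⟦X⟧)*g^3*A^4*B^2 + (-4)*(X:ℂ⟦X⟧)*g^3*A^5 + (-6)*(X:ℂ⟦X⟧)*g^3*A^5*B + (-12)*(X:ℂ⟦X⟧)*g^3*A^5*B^2 + (-2)*(X:ℂ⟦X⟧)*g^3*A^6*B + (-8)*(X:ℂ⟦X⟧)*g^3*A^6*B^2 + (-2)*(X:ℂ⟦X⟧)*g^3*A^7*B^2 + (-18)*(X:ℂ⟦X⟧)^2*(dd V) + (-72)*(X:ℂ⟦X⟧)^2*A*(dd V) + (-90)*(X:ℂ⟦X⟧)^2*A^2*(dd V) + (-36)*(X:ℂ⟦X⟧)^2*A^3*(dd V) + (18)*(X:ℂ⟦X⟧)^2*(dd g)*A + (36)*(X:ℂ⟦X⟧)^2*(dd g)*A^2 + (18)*(X:ℂ⟦X⟧)^2*(dd g)*A^3 + (6)*(X:ℂ⟦X⟧)^2*(dd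 g)*V*A + (24)*(X:ℂ⟦X⟧)^2*(dd g)*V*A^2 + (30)*(X:ℂ⟦X⟧)^2*(dd g)*V*A^3 + (12)*(X:ℂ⟦X⟧)^2*(dd g)*V*A^4 + (-4)*(X:ℂ⟦X⟧)^2*g*V*A + (-16)*(X:ℂ⟦X⟧)^2*g*V*A^2 + (-20)*(X:ℂ⟦X⟧)^2*g*V*A^3 + (-8)*(X:ℂ⟦X⟧)^2*g*V*A^4 + (4)*(X:ℂ⟦X⟧)^2*g*V^3*A + (4)*(X:ℂ⟦X⟧)^2*g*V^3*A*B + (4)*(X:ℂ⟦X⟧)^2*g*V^3*A*B^2 + (32)*(X:ℂ⟦X⟧)^2*g*V^3*A^2 + (36)*(X:ℂ⟦X⟧)^2*g*V^3*A^2*B + (40)*(X:ℂ⟦X⟧)^2*g*V^3*A^2*B^2 + (100)*(X:ℂ⟦X⟧)^2*g*V^3*A^3 + (132)*(X:ℂ⟦X⟧)^2*g*V^3*A^3*B + (168)*(X:ℂ⟦X⟧)^2*g*V^3*A^3*B^2 + (152)*(X:ℂ⟦X⟧)^2*g*V^3*A^4 + (252)*(X:ℂ⟦X⟧)^2*g*V^3*A^4*B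 + (384)*(X:ℂ⟦X⟧)^2*g*V^3*A^4*B^2 + (112)*(X:ℂ⟦X⟧)^2*g*V^3*A^5 + (264)*(X:ℂ⟦X⟧)^2*g*V^3*A^5*B + (516)*(X:ℂ⟦X⟧)^2*g*V^3*A^5*B^2 + (32)*(X:ℂ⟦X⟧)^2*g*V^3*A^6 + (144)*(X:ℂ⟦X⟧)^2*g*V^3*A^6*B + (408)*(X:ℂ⟦X⟧)^2*g*V^3*A^6*B^2 + (32)*(X:ℂ⟦X⟧)^2*g*V^3*A^7*B + (176)*(X:ℂ⟦X⟧)^2*g*V^3*A^7*B^2 + (32)*(X:ℂ⟦X⟧)^2*g*V^3*A^8*B^2 + (-6)*(X:ℂ⟦X⟧)^2*g*(dd g)*A^2 + (-12)*(X:ℂ⟦X⟧)^2*g*(dd g)*A^3 + (-6)*(X:ℂ⟦X⟧)^2*g*(dd g)*A^4 + (4)*(X:ℂ⟦X⟧)^2*g^2*A^2 + (8)*(X:ℂ⟦X⟧)^2*g^2*A^3 + (4)*(X:ℂ⟦X⟧)^2*g^2*A^4 + (-4)*(X:ℂ⟦X⟧)^2*g^2*V*A^2 + (-16)*(X:ℂ⟦X⟧)^2*g^2*V*A^3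 + (-20)*(X:ℂ⟦X⟧)^2*g^2*V*A^4 + (-8)*(X:ℂ⟦X⟧)^2*g^2*V*A^5 + (-12)*(X:ℂ⟦X⟧)^2*g^2*V^2*A^2 + (-12)*(X:ℂ⟦X⟧)^2*g^2*V^2*A^2*B + (-12)*(X:ℂ⟦X⟧)^2*g^2*V^2*A^2*B^2 + (-72)*(X:ℂ⟦X⟧)^2*g^2*V^2*A^3 + (-84)*(X:ℂ⟦X⟧)^2*g^2*V^2*A^3*B + (-96)*(X:ℂ⟦X⟧)^2*g^2*V^2*A^3*B^2 + (-156)*(X:ℂ⟦X⟧)^2*g^2*V^2*A^4 + (-228)*(X:ℂ⟦X⟧)^2*g^2*V^2*A^4*B + (-312)*(X:ℂ⟦X⟧)^2*g^2*V^2*A^4*B^2 + (-144)*(X:ℂ⟦X⟧)^2*g^2*V^2*A^5 + (-300)*(X:ℂ⟦X⟧)^2*g^2*V^2*A^5*B + (-528)*(X:ℂ⟦X⟧)^2*g^2*V^2*A^5*B^2 + (-48)*(X:ℂ⟦X⟧)^2*g^2*V^2*A^6 + (-192)*(X:ℂ⟦X⟧)^2*g^2*V^2*A^6*B + (-492)*(X:ℂ⟦X⟧)^2*g^2*V^2*A^6*B^2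 + (-48)*(X:ℂ⟦X⟧)^2*g^2*V^2*A^7*B + (-240)*(X:ℂ⟦X⟧)^2*g^2*V^2*A^7*B^2 + (-48)*(X:ℂ⟦X⟧)^2*g^2*V^2*A^8*B^2 + (4)*(X:ℂ⟦X⟧)^2*g^2*V^3*A^2 + (4)*(X:ℂ⟦X⟧)^2*g^2*V^3*A^2*B + (4)*(X:ℂ⟦X⟧)^2*g^2*V^3*A^2*B^2 + (32)*(X:ℂ⟦X⟧)^2*g^2*V^3*A^3 + (36)*(X:ℂ⟦X⟧)^2*g^2*V^3*A^3*B + (40)*(X:ℂ⟦X⟧)^2*g^2*V^3*A^3*B^2 + (100)*(X:ℂ⟦X⟧)^2*g^2*V^3*A^4 + (132)*(X:ℂ⟦X⟧)^2*g^2*V^3*A^4*B + (168)*(X:ℂ⟦X⟧)^2*g^2*V^3*A^4*B^2 + (152)*(X:ℂ⟦X⟧)^2*g^2*V^3*A^5 + (252)*(X:ℂ⟦X⟧)^2*g^2*V^3*A^5*B + (384)*(X:ℂ⟦X⟧)^2*g^2*V^3*A^5*B^2 + (112)*(X:ℂ⟦X⟧)^2*g^2*V^3*A^6 + (264)*(X:ℂ⟦X⟧)^2*g^2*V^3*A^6*B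 + (516)*(X:ℂ⟦X⟧)^2*g^2*V^3*A^6*B^2 + (32)*(X:ℂ⟦X⟧)^2*g^2*V^3*A^7 + (144)*(X:ℂ⟦X⟧)^2*g^2*V^3*A^7*B + (408)*(X:ℂ⟦X⟧)^2*g^2*V^3*A^7*B^2 + (32)*(X:ℂ⟦X⟧)^2*g^2*V^3*A^8*B + (176)*(X:ℂ⟦X⟧)^2*g^2*V^3*A^8*B^2 + (32)*(X:ℂ⟦X⟧)^2*g^2*V^3*A^9*B^2 + (4)*(X:ℂ⟦X⟧)^2*g^3*A^3 + (8)*(X:ℂ⟦X⟧)^2*g^3*A^4 + (4)*(X:ℂ⟦X⟧)^2*g^3*A^5 + (12)*(X:ℂ⟦X⟧)^2*g^3*V*A^3 + (12)*(X:ℂ⟦X⟧)^2*g^3*V*A^3*B + (12)*(X:ℂ⟦X⟧)^2*g^3*V*A^3*B^2 + (48)*(X:ℂ⟦X⟧)^2*g^3*V*A^4 + (60)*(X:ℂ⟦X⟧)^2*g^3*V*A^4*B + (72)*(X:ℂ⟦X⟧)^2*g^3*V*A^4*B^2 + (60)*(X:ℂ⟦X⟧)^2*g^3*V*A^5 + (108)*(X:ℂ⟦X⟧)^2*g^3*V*A^5*B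 + (168)*(X:ℂ⟦X⟧)^2*g^3*V*A^5*B^2 + (24)*(X:ℂ⟦X⟧)^2*g^3*V*A^6 + (84)*(X:ℂ⟦X⟧)^2*g^3*V*A^6*B + (192)*(X:ℂ⟦X⟧)^2*g^3*V*A^6*B^2 + (24)*(X:ℂ⟦X⟧)^2*g^3*V*A^7*B + (108)*(X:ℂ⟦X⟧)^2*g^3*V*A^7*B^2 + (24)*(X:ℂ⟦X⟧)^2*g^3*V*A^8*B^2 + (-12)*(X:ℂ⟦X⟧)^2*g^3*V^2*A^3 + (-12)*(X:ℂ⟦X⟧)^2*g^3*V^2*A^3*B + (-12)*(X:ℂ⟦X⟧)^2*g^3*V^2*A^3*B^2 + (-72)*(X:ℂ⟦X⟧)^2*g^3*V^2*A^4 + (-84)*(X:ℂ⟦X⟧)^2*g^3*V^2*A^4*B + (-96)*(X:ℂ⟦X⟧)^2*g^3*V^2*A^4*B^2 + (-156)*(X:ℂ⟦X⟧)^2*g^3*V^2*A^5 + (-228)*(X:ℂ⟦X⟧)^2*g^3*V^2*A^5*B + (-312)*(X:ℂ⟦X⟧)^2*g^3*V^2*A^5*B^2 + (-144)*(X:ℂ⟦X⟧)^2*g^3*V^2*A^6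 + (-300)*(X:ℂ⟦X⟧)^2*g^3*V^2*A^6*B + (-528)*(X:ℂ⟦X⟧)^2*g^3*V^2*A^6*B^2 + (-48)*(X:ℂ⟦X⟧)^2*g^3*V^2*A^7 + (-192)*(X:ℂ⟦X⟧)^2*g^3*V^2*A^7*B + (-492)*(X:ℂ⟦X⟧)^2*g^3*V^2*A^7*B^2 + (-48)*(X:ℂ⟦X⟧)^2*g^3*V^2*A^8*B + (-240)*(X:ℂ⟦X⟧)^2*g^3*V^2*A^8*B^2 + (-48)*(X:ℂ⟦X⟧)^2*g^3*V^2*A^9*B^2 + (-4)*(X:ℂ⟦X⟧)^2*g^4*A^4 + (-4)*(X:ℂ⟦X⟧)^2*g^4*A^4*B + (-4)*(X:ℂ⟦X⟧)^2*g^4*A^4*B^2 + (-8)*(X:ℂ⟦X⟧)^2*g^4*A^5 + (-12)*(X:ℂ⟦X⟧)^2*g^4*A^5*B + (-16)*(X:ℂ⟦X⟧)^2*g^4*A^5*B^2 + (-4)*(X:ℂ⟦X⟧)^2*g^4*A^6 + (-12)*(X:ℂ⟦X⟧)^2*g^4*A^6*B + (-24)*(X:ℂ⟦X⟧)^2*g^4*A^6*B^2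 + (-4)*(X:ℂ⟦X⟧)^2*g^4*A^7*B + (-16)*(X:ℂ⟦X⟧)^2*g^4*A^7*B^2 + (-4)*(X:ℂ⟦X⟧)^2*g^4*A^8*B^2 + (12)*(X:ℂ⟦X⟧)^2*g^4*V*A^4 + (12)*(X:ℂ⟦X⟧)^2*g^4*V*A^4*B + (12)*(X:ℂ⟦X⟧)^2*g^4*V*A^4*B^2 + (48)*(X:ℂ⟦X⟧)^2*g^4*V*A^5 + (60)*(X:ℂ⟦X⟧)^2*g^4*V*A^5*B + (72)*(X:ℂ⟦X⟧)^2*g^4*V*A^5*B^2 + (60)*(X:ℂ⟦X⟧)^2*g^4*V*A^6 + (108)*(X:ℂ⟦X⟧)^2*g^4*V*A^6*B + (168)*(X:ℂ⟦X⟧)^2*g^4*V*A^6*B^2 + (24)*(X:ℂ⟦X⟧)^2*g^4*V*A^7 + (84)*(X:ℂ⟦X⟧)^2*g^4*V*A^7*B + (192)*(X:ℂ⟦X⟧)^2*g^4*V*A^7*B^2 + (24)*(X:ℂ⟦X⟧)^2*g^4*V*A^8*B + (108)*(X:ℂ⟦X⟧)^2*g^4*V*A^8*B^2 + (24)*(X:ℂ⟦X⟧)^2*g^4*V*A^9*B^2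 + (-4)*(X:ℂ⟦X⟧)^2*g^5*A^5 + (-4)*(X:ℂ⟦X⟧)^2*g^5*A^5*B + (-4)*(X:ℂ⟦X⟧)^2*g^5*A^5*B^2 + (-8)*(X:ℂ⟦X⟧)^2*g^5*A^6 + (-12)*(X:ℂ⟦X⟧)^2*g^5*A^6*B + (-16)*(X:ℂ⟦X⟧)^2*g^5*A^6*B^2 + (-4)*(X:ℂ⟦X⟧)^2*g^5*A^7 + (-12)*(X:ℂ⟦X⟧)^2*g^5*A^7*B + (-24)*(X:ℂ⟦X⟧)^2*g^5*A^7*B^2 + (-4)*(X:ℂ⟦X⟧)^2*g^5*A^8*B + (-16)*(X:ℂ⟦X⟧)^2*g^5*A^8*B^2 + (-4)*(X:ℂ⟦X⟧)^2*g^5*A^9*B^2 + (-9)*(X:ℂ⟦X⟧)^3*(dd (dd V)) + (-36)*(X:ℂ⟦X⟧)^3*A*(dd (dd V)) + (-45)*(X:ℂ⟦X⟧)^3*A^2*(dd (dd V)) + (-18)*(X:ℂ⟦X⟧)^3*A^3*(dd (dd V)) + (9)*(X:ℂ⟦X⟧)^3*(dd (dd g))*A + (18)*(X:ℂ⟦X⟧)^3*(dd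 (dd g))*A^2 + (9)*(X:ℂ⟦X⟧)^3*(dd (dd g))*A^3 + (-12)*(X:ℂ⟦X⟧)^3*(dd g)*V*A + (-48)*(X:ℂ⟦X⟧)^3*(dd g)*V*A^2 + (-60)*(X:ℂ⟦X⟧)^3*(dd g)*V*A^3 + (-24)*(X:ℂ⟦X⟧)^3*(dd g)*V*A^4 + (12)*(X:ℂ⟦X⟧)^3*(dd g)*V^3*A + (12)*(X:ℂ⟦X⟧)^3*(dd g)*V^3*A*B + (12)*(X:ℂ⟦X⟧)^3*(dd g)*V^3*A*B^2 + (96)*(X:ℂ⟦X⟧)^3*(dd g)*V^3*A^2 + (108)*(X:ℂ⟦X⟧)^3*(dd g)*V^3*A^2*B + (120)*(X:ℂ⟦X⟧)^3*(dd g)*V^3*A^2*B^2 + (300)*(X:ℂ⟦X⟧)^3*(dd g)*V^3*A^3 + (396)*(X:ℂ⟦X⟧)^3*(dd g)*V^3*A^3*B + (504)*(X:ℂ⟦X⟧)^3*(dd g)*V^3*A^3*B^2 + (456)*(X:ℂ⟦X⟧)^3*(dd g)*V^3*A^4 + (756)*(X:ℂ⟦X⟧)^3*(dd g)*V^3*A^4*B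 + (1152)*(X:ℂ⟦X⟧)^3*(dd g)*V^3*A^4*B^2 + (336)*(X:ℂ⟦X⟧)^3*(dd g)*V^3*A^5 + (792)*(X:ℂ⟦X⟧)^3*(dd g)*V^3*A^5*B + (1548)*(X:ℂ⟦X⟧)^3*(dd g)*V^3*A^5*B^2 + (96)*(X:ℂ⟦X⟧)^3*(dd g)*V^3*A^6 + (432)*(X:ℂ⟦X⟧)^3*(dd g)*V^3*A^6*B + (1224)*(X:ℂ⟦X⟧)^3*(dd g)*V^3*A^6*B^2 + (96)*(X:ℂ⟦X⟧)^3*(dd g)*V^3*A^7*B + (528)*(X:ℂ⟦X⟧)^3*(dd g)*V^3*A^7*B^2 + (96)*(X:ℂ⟦X⟧)^3*(dd g)*V^3*A^8*B^2 + (-36)*(X:ℂ⟦X⟧)^3*g*A*(dd V) + (-144)*(X:ℂ⟦X⟧)^3*g*A^2*(dd V) + (-180)*(X:ℂ⟦X⟧)^3*g*A^3*(dd V) + (-72)*(X:ℂ⟦X⟧)^3*g*A^4*(dd V) + (48)*(X:ℂ⟦X⟧)^3*g*(dd g)*A^2 + (96)*(X:ℂ⟦X⟧)^3*g*(dd g)*A^3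 + (48)*(X:ℂ⟦X⟧)^3*g*(dd g)*A^4 + (-36)*(X:ℂ⟦X⟧)^3*g*(dd g)*V^2*A^2 + (-36)*(X:ℂ⟦X⟧)^3*g*(dd g)*V^2*A^2*B + (-36)*(X:ℂ⟦X⟧)^3*g*(dd g)*V^2*A^2*B^2 + (-216)*(X:ℂ⟦X⟧)^3*g*(dd g)*V^2*A^3 + (-252)*(X:ℂ⟦X⟧)^3*g*(dd g)*V^2*A^3*B + (-288)*(X:ℂ⟦X⟧)^3*g*(dd g)*V^2*A^3*B^2 + (-468)*(X:ℂ⟦X⟧)^3*g*(dd g)*V^2*A^4 + (-684)*(X:ℂ⟦X⟧)^3*g*(dd g)*V^2*A^4*B + (-936)*(X:ℂ⟦X⟧)^3*g*(dd g)*V^2*A^4*B^2 + (-432)*(X:ℂ⟦X⟧)^3*g*(dd g)*V^2*A^5 + (-900)*(X:ℂ⟦X⟧)^3*g*(dd g)*V^2*A^5*B + (-1584)*(X:ℂ⟦X⟧)^3*g*(dd g)*V^2*A^5*B^2 + (-144)*(X:ℂ⟦X⟧)^3*g*(dd g)*V^2*A^6 + (-576)*(X:ℂ⟦X⟧)^3*g*(dd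 g)*V^2*A^6*B + (-1476)*(X:ℂ⟦X⟧)^3*g*(dd g)*V^2*A^6*B^2 + (-144)*(X:ℂ⟦X⟧)^3*g*(dd g)*V^2*A^7*B + (-720)*(X:ℂ⟦X⟧)^3*g*(dd g)*V^2*A^7*B^2 + (-144)*(X:ℂ⟦X⟧)^3*g*(dd g)*V^2*A^8*B^2 + (-36)*(X:ℂ⟦X⟧)^3*g^2*A^2*(dd V) + (-144)*(X:ℂ⟦X⟧)^3*g^2*A^3*(dd V) + (-180)*(X:ℂ⟦X⟧)^3*g^2*A^4*(dd V) + (-72)*(X:ℂ⟦X⟧)^3*g^2*A^5*(dd V) + (36)*(X:ℂ⟦X⟧)^3*g^2*(dd g)*A^3 + (72)*(X:ℂ⟦X⟧)^3*g^2*(dd g)*A^4 + (36)*(X:ℂ⟦X⟧)^3*g^2*(dd g)*A^5 + (36)*(X:ℂ⟦X⟧)^3*g^2*(dd g)*V*A^3 + (36)*(X:ℂ⟦X⟧)^3*g^2*(dd g)*V*A^3*B + (36)*(X:ℂ⟦X⟧)^3*g^2*(dd g)*V*A^3*B^2 + (144)*(X:ℂ⟦X⟧)^3*g^2*(dd g)*V*A^4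 + (180)*(X:ℂ⟦X⟧)^3*g^2*(dd g)*V*A^4*B + (216)*(X:ℂ⟦X⟧)^3*g^2*(dd g)*V*A^4*B^2 + (180)*(X:ℂ⟦X⟧)^3*g^2*(dd g)*V*A^5 + (324)*(X:ℂ⟦X⟧)^3*g^2*(dd g)*V*A^5*B + (504)*(X:ℂ⟦X⟧)^3*g^2*(dd g)*V*A^5*B^2 + (72)*(X:ℂ⟦X⟧)^3*g^2*(dd g)*V*A^6 + (252)*(X:ℂ⟦X⟧)^3*g^2*(dd g)*V*A^6*B + (576)*(X:ℂ⟦X⟧)^3*g^2*(dd g)*V*A^6*B^2 + (72)*(X:ℂ⟦X⟧)^3*g^2*(dd g)*V*A^7*B + (324)*(X:ℂ⟦X⟧)^3*g^2*(dd g)*V*A^7*B^2 + (72)*(X:ℂ⟦X⟧)^3*g^2*(dd g)*V*A^8*B^2 + (-12)*(X:ℂ⟦X⟧)^3*g^3*(dd g)*A^4 + (-12)*(X:ℂ⟦X⟧)^3*g^3*(dd g)*A^4*B + (-12)*(X:ℂ⟦X⟧)^3*g^3*(dd g)*A^4*B^2 + (-24)*(X:ℂ⟦X⟧)^3*g^3*(dd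 g)*A^5 + (-36)*(X:ℂ⟦X⟧)^3*g^3*(dd g)*A^5*B + (-48)*(X:ℂ⟦X⟧)^3*g^3*(dd g)*A^5*B^2 + (-12)*(X:ℂ⟦X⟧)^3*g^3*(dd g)*A^6 + (-36)*(X:ℂ⟦X⟧)^3*g^3*(dd g)*A^6*B + (-72)*(X:ℂ⟦X⟧)^3*g^3*(dd g)*A^6*B^2 + (-12)*(X:ℂ⟦X⟧)^3*g^3*(dd g)*A^7*B + (-48)*(X:ℂ⟦X⟧)^3*g^3*(dd g)*A^7*B^2 + (-12)*(X:ℂ⟦X⟧)^3*g^3*(dd g)*A^8*B^2 + (-108)*(X:ℂ⟦X⟧)^4*(dd g)*A*(dd V) + (-432)*(X:ℂ⟦X⟧)^4*(dd g)*A^2*(dd V) + (-540)*(X:ℂ⟦X⟧)^4*(dd g)*A^3*(dd V) + (-216)*(X:ℂ⟦X⟧)^4*(dd g)*A^4*(dd V) + (108)*(X:ℂ⟦X⟧)^4*(dd g)^2*A^2 + (216)*(X:ℂ⟦X⟧)^4*(dd g)^2*A^3 + (108)*(X:ℂ⟦X⟧)^4*(dd g)^2*A^4 + (-18)*(X:ℂ⟦X⟧)^4*g*A*(dd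 (dd V)) + (-72)*(X:ℂ⟦X⟧)^4*g*A^2*(dd (dd V)) + (-90)*(X:ℂ⟦X⟧)^4*g*A^3*(dd (dd V)) + (-36)*(X:ℂ⟦X⟧)^4*g*A^4*(dd (dd V)) + (18)*(X:ℂ⟦X⟧)^4*g*(dd (dd g))*A^2 + (36)*(X:ℂ⟦X⟧)^4*g*(dd (dd g))*A^3 + (18)*(X:ℂ⟦X⟧)^4*g*(dd (dd g))*A^4 + (-18)*(X:ℂ⟦X⟧)^4*g^2*A^2*(dd (dd V)) + (-72)*(X:ℂ⟦X⟧)^4*g^2*A^3*(dd (dd V)) + (-90)*(X:ℂ⟦X⟧)^4*g^2*A^4*(dd (dd V)) + (-36)*(X:ℂ⟦X⟧)^4*g^2*A^5*(dd (dd V)) + (18)*(X:ℂ⟦X⟧)^4*g^2*(dd (dd g))*A^3 + (36)*(X:ℂ⟦X⟧)^4*g^2*(dd (dd g))*A^4 + (18)*(X:ℂ⟦X⟧)^4*g^2*(dd (dd g))*A^5 + (-54)*(X:ℂ⟦X⟧)^5*(dd g)*A*(dd (dd V)) + (-216)*(X:ℂ⟦X⟧)^5*(dd g)*A^2*(dd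 (dd V)) + (-270)*(X:ℂ⟦X⟧)^5*(dd g)*A^3*(dd (dd V)) + (-108)*(X:ℂ⟦X⟧)^5*(dd g)*A^4*(dd (dd V)) + (54)*(X:ℂ⟦X⟧)^5*(dd g)*(dd (dd g))*A^2 + (108)*(X:ℂ⟦X⟧)^5*(dd g)*(dd (dd g))*A^3 + (54)*(X:ℂ⟦X⟧)^5*(dd g)*(dd (dd g))*A^4) * hInv + ((-2)*(X:ℂ⟦X⟧) + (-8)*(X:ℂ⟦X⟧)*A + (-10)*(X:ℂ⟦X⟧)*A^2 + (-4)*(X:ℂ⟦X⟧)*A^3 + (-2)*(X:ℂ⟦X⟧)*V + (-12)*(X:ℂ⟦X⟧)*V*A + (-26)*(X:ℂ⟦X⟧)*V*A^2 + (-24)*(X:ℂ⟦X⟧)*V*A^3 + (-8)*(X:ℂ⟦X⟧)*V*A^4 + (2)*(X:ℂ⟦X⟧)*g*A + (8)*(X:ℂ⟦X⟧)*g*A^2 + (10)*(X:ℂ⟦X⟧)*g*A^3 + (4)*(X:ℂ⟦X⟧)*g*A^4 + (-4)*(X:ℂ⟦X⟧)^2*g*A + (-16)*(X:ℂ⟦X⟧)^2*g*A^2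 + (-20)*(X:ℂ⟦X⟧)^2*g*A^3 + (-8)*(X:ℂ⟦X⟧)^2*g*A^4 + (-4)*(X:ℂ⟦X⟧)^2*g*V*A + (-24)*(X:ℂ⟦X⟧)^2*g*V*A^2 + (-52)*(X:ℂ⟦X⟧)^2*g*V*A^3 + (-48)*(X:ℂ⟦X⟧)^2*g*V*A^4 + (-16)*(X:ℂ⟦X⟧)^2*g*V*A^5 + (-4)*(X:ℂ⟦X⟧)^2*g^2*V*A^2 + (-24)*(X:ℂ⟦X⟧)^2*g^2*V*A^3 + (-52)*(X:ℂ⟦X⟧)^2*g^2*V*A^4 + (-48)*(X:ℂ⟦X⟧)^2*g^2*V*A^5 + (-16)*(X:ℂ⟦X⟧)^2*g^2*V*A^6 + (4)*(X:ℂ⟦X⟧)^2*g^3*A^3 + (16)*(X:ℂ⟦X⟧)^2*g^3*A^4 + (20)*(X:ℂ⟦X⟧)^2*g^3*A^5 + (8)*(X:ℂ⟦X⟧)^2*g^3*A^6 + (-12)*(X:ℂ⟦X⟧)^3*(dd g)*A + (-48)*(X:ℂ⟦X⟧)^3*(dd g)*A^2 + (-60)*(X:ℂ⟦X⟧)^3*(dd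 g)*A^3 + (-24)*(X:ℂ⟦X⟧)^3*(dd g)*A^4 + (-12)*(X:ℂ⟦X⟧)^3*(dd g)*V*A + (-72)*(X:ℂ⟦X⟧)^3*(dd g)*V*A^2 + (-156)*(X:ℂ⟦X⟧)^3*(dd g)*V*A^3 + (-144)*(X:ℂ⟦X⟧)^3*(dd g)*V*A^4 + (-48)*(X:ℂ⟦X⟧)^3*(dd g)*V*A^5 + (12)*(X:ℂ⟦X⟧)^3*g*(dd g)*A^2 + (48)*(X:ℂ⟦X⟧)^3*g*(dd g)*A^3 + (60)*(X:ℂ⟦X⟧)^3*g*(dd g)*A^4 + (24)*(X:ℂ⟦X⟧)^3*g*(dd g)*A^5) * h1 + ((-3)*(X:ℂ⟦X⟧)^2 + (-12)*(X:ℂ⟦X⟧)^2*A + (-15)*(X:ℂ⟦X⟧)^2*A^2 + (-6)*(X:ℂ⟦X⟧)^2*A^3 + (-6)*(X:ℂ⟦X⟧)^3*g*A + (-24)*(X:ℂ⟦X⟧)^3*g*A^2 + (-30)*(X:ℂ⟦X⟧)^3*g*A^3 + (-12)*(X:ℂ⟦X⟧)^3*g*A^4 + (-6)*(X:ℂ⟦X⟧)^3*g^2*A^2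 + (-24)*(X:ℂ⟦X⟧)^3*g^2*A^3 + (-30)*(X:ℂ⟦X⟧)^3*g^2*A^4 + (-12)*(X:ℂ⟦X⟧)^3*g^2*A^5 + (-18)*(X:ℂ⟦X⟧)^4*(dd g)*A + (-72)*(X:ℂ⟦X⟧)^4*(dd g)*A^2 + (-90)*(X:ℂ⟦X⟧)^4*(dd g)*A^3 + (-36)*(X:ℂ⟦X⟧)^4*(dd g)*A^4) * h2

def Geo (g : ℂ⟦X⟧) : Prop := ∃ C : ℝ, 1 ≤ C ∧ ∀ n, ‖coeff n g‖ ≤ C^(n+1)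

lemma geo_C (a : ℂ) : Geo (C a) := by
  refine ⟨max 1 (‖a‖), le_max_left _ _, fun n => ?_⟩
  rw [coeff_C]
  split_ifs with h
  · subst h
    calc ‖a‖ ≤ max 1 (‖a‖) := le_max_right _ _
    _ ≤ (max 1 (‖a‖))^(0+1) := by rw [pow_one]
  · simpa using one_le_pow₀ (le_max_left _ _) (n := n+1)

lemma geo_one : Geo 1 := by simpa using geo_C 1

lemma geo_X : Geo (X : ℂ⟦X⟧) := by
  refine ⟨1, le_refl _, fun n => ?_⟩
  rw [coeff_X]
  split_ifs <;> simp

lemma geo_neg {g} (hg : Geo g) : Geo (-g) := by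
  obtain ⟨c, hc, h⟩ := hg
  exact ⟨c, hc, fun n => by simpa using h n⟩

lemma geo_add {g h} (hg : Geo g) (hh : Geo h) : Geo (g + h) := by
  obtain ⟨c1, hc1, h1⟩ := hg
  obtain ⟨c2, hc2, h2⟩ := hh
  refine ⟨c1 + c2, by linarith, fun n => ?_⟩
  rw [map_add]
  calc ‖coeff n g + coeff n h‖ ≤ _ + _ := norm_add_le _ _
  _ ≤ c1^(n+1) + c2^(n+1) := add_le_add (h1 n) (h2 n)
  _ ≤ (c1 + c2)^(n+1) := pow_add_pow_le (by linarith) (by linarith) (Nat.succ_ne_zero n)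

lemma geo_sub {g h} (hg : Geo g) (hh : Geo h) : Geo (g - h) := by
  rw [sub_eq_add_neg]; exact geo_add hg (geo_neg hh)

lemma natcast_le_two_pow (n : ℕ) : ((n:ℝ)+1) ≤ 2^(n+1) := by
  have h := (Nat.lt_two_pow_self (n := n+1)).le
  calc ((n:ℝ)+1) = ((n+1 : ℕ) : ℝ) := by push_cast; ring
  _ ≤ ((2^(n+1) : ℕ) : ℝ) := by exact_mod_cast h
  _ = 2^(n+1) := by push_cast; ring

lemma geo_mul {g h} (hg : Geo g) (hh : Geo h) : Geo (g * h) := by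
  obtain ⟨c1, hc1, h1⟩ := hg
  obtain ⟨c2, hc2, h2⟩ := hh
  have hcc : (1:ℝ) ≤ c1*c2 := by nlinarith
  refine ⟨2*(c1*c2), by nlinarith, fun n => ?_⟩
  rw [coeff_mul, Finset.Nat.sum_antidiagonal_eq_sum_range_succ_mk]
  have step1 : ∀ k ∈ Finset.range (n+1),
      ‖coeff k g * coeff (n - k) h‖ ≤ (c1*c2)^(n+1) := by
    intro k hk
    have hk' : k ≤ n := Nat.lt_succ_iff.mp (Finset.mem_range.mp hk)
    rw [norm_mul]
    calc ‖coeff k g‖ * ‖coeff (n-k) h‖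
        ≤ c1^(k+1) * c2^(n-k+1) :=
          mul_le_mul (h1 k) (h2 (n-k)) (norm_nonneg _) (pow_nonneg (by linarith) _)
    _ ≤ c1^(n+1) * c2^(n+1) :=
          mul_le_mul (pow_le_pow_right₀ hc1 (by omega)) (pow_le_pow_right₀ hc2 (by omega))
            (pow_nonneg (by linarith) _) (pow_nonneg (by linarith) _)
    _ = (c1*c2)^(n+1) := (mul_pow _ _ _).symm
  calc ‖∑ k ∈ Finset.range (n+1), coeff k g * coeff (n - k) h‖
      ≤ ∑ k ∈ Finset.range (n+1), ‖coeff k g * coeff (n - k) h‖ :=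
        norm_sum_le _ _
  _ ≤ ∑ _k ∈ Finset.range (n+1), (c1*c2)^(n+1) := Finset.sum_le_sum step1
  _ = ((n:ℝ)+1) * (c1*c2)^(n+1) := by rw [Finset.sum_const, Finset.card_range]; push_cast; ring
  _ ≤ 2^(n+1) * (c1*c2)^(n+1) := by
      have := natcast_le_two_pow n
      have : (0:ℝ) ≤ (c1*c2)^(n+1) := pow_nonneg (by linarith) _
      nlinarith [natcast_le_two_pow n]
  _ = (2*(c1*c2))^(n+1) := by rw [mul_pow 2 (c1*c2), mul_pow c1 c2]

lemma geo_deriv {g} (hg : Geo g) : Geo (dd g) := by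
  obtain ⟨c, hc, h⟩ := hg
  refine ⟨2*c^2, by nlinarith, fun n => ?_⟩
  rw [PowerSeries.coeff_derivative, norm_mul,
    show ((n:ℂ)+1 : ℂ) = (((n+1):ℕ) : ℂ) by push_cast; ring, Complex.norm_natCast]
  calc ‖coeff (n+1) g‖ * ((n+1 : ℕ) : ℝ) ≤ c^(n+2) * 2^(n+1) := by
        apply mul_le_mul (h (n+1)) ?_ (by positivity) (by positivity)
        calc ((n+1:ℕ):ℝ) = (n:ℝ)+1 := by push_cast; ring
        _ ≤ 2^(n+1) := natcast_le_two_pow n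
  _ ≤ (c^2)^(n+1) * 2^(n+1) := by
        apply mul_le_mul_of_nonneg_right ?_ (by positivity)
        rw [← pow_mul]
        exact pow_le_pow_right₀ hc (by omega)
  _ = (2*c^2)^(n+1) := by rw [mul_pow]; ring


lemma geom_sum_id (c d : ℝ) (hdc : d - c = c^2) (n : ℕ) :
    c^2 * (∑ i ∈ Finset.range (n+1), c^i * d^(n-i)) = d^(n+1) - c^(n+1) := by
  induction n with
  | zero => simpa using by linarith
  | succ n ih =>
      have hstep : (∑ i ∈ Finset.range (n+2), c^i * d^(n+1-i))
          = d * (∑ i ∈ Finset.range (n+1), c^i * d^(n-i)) + c^(n+1) := by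
        rw [Finset.sum_range_succ, Finset.mul_sum]
        have : ∀ i ∈ Finset.range (n+1), c^i * d^(n+1-i) = d * (c^i * d^(n-i)) := by
          intro i hi
          have hi' : i ≤ n := Nat.lt_succ_iff.mp (Finset.mem_range.mp hi)
          rw [show n+1-i = (n-i)+1 by omega, pow_succ]
          ring
        rw [Finset.sum_congr rfl this]
        simp
      rw [hstep]
      have : n+1+1 = n+2 := rfl
      linear_combination d*ih - c^(n+1)*hdc

lemma geo_inv {g : ℂ⟦X⟧} (h0 : constantCoeff g = 1) (hg : Geo g) : Geo g⁻¹ := by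
  obtain ⟨c, hc, h⟩ := hg
  set D := c^2 + c with hD
  have hD1 : (1:ℝ) ≤ D := by nlinarith
  have hne : constantCoeff g ≠ 0 := by rw [h0]; exact one_ne_zero
  have hmul := PowerSeries.mul_inv_cancel g hne
  have key : ∀ n, ‖coeff n g⁻¹‖ ≤ D^n := by
    intro n
    induction n using Nat.strong_induction_on with
    | _ n ih =>
      match n with
      | 0 =>
        rw [coeff_zero_eq_constantCoeff, PowerSeries.constantCoeff_inv, h0]
        simp
      | Nat.succ n =>
        have hco : coeff (n+1) (g * g⁻¹) = 0 := by rw [hmul, coeff_one]; simp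
        rw [coeff_mul, Finset.Nat.sum_antidiagonal_eq_sum_range_succ_mk,
          Finset.sum_range_succ'] at hco
        have hg0 : coeff 0 g = 1 := by rw [coeff_zero_eq_constantCoeff, h0]
        rw [hg0] at hco
        have hb : coeff (n+1) g⁻¹
            = - ∑ i ∈ Finset.range (n+1), coeff (i+1) g * coeff (n+1-(i+1)) g⁻¹ := by
          have h2 := hco
          simp only [Nat.sub_zero, one_mul] at h2
          linear_combination h2
        rw [hb]
        have hterm : ∀ i ∈ Finset.range (n+1),
            ‖coeff (i+1) g * coeff (n+1-(i+1)) g⁻¹‖ ≤ c^(i+2) * D^(n-i) := by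
          intro i hi
          have hi' : i ≤ n := Nat.lt_succ_iff.mp (Finset.mem_range.mp hi)
          have heq : n+1-(i+1) = n-i := by omega
          rw [norm_mul, heq]
          apply mul_le_mul (h (i+1)) (ih (n-i) (by omega)) (norm_nonneg _)
            (pow_nonneg (by linarith) _)
        calc ‖-∑ i ∈ Finset.range (n+1), coeff (i+1) g * coeff (n+1-(i+1)) g⁻¹‖
            = ‖∑ i ∈ Finset.range (n+1), coeff (i+1) g * coeff (n+1-(i+1)) g⁻¹‖ :=
              (norm_neg _)
        _ ≤ ∑ i ∈ Finset.range (n+1),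
              ‖coeff (i+1) g * coeff (n+1-(i+1)) g⁻¹‖ := norm_sum_le _ _
        _ ≤ ∑ i ∈ Finset.range (n+1), c^(i+2) * D^(n-i) := Finset.sum_le_sum hterm
        _ = c^2 * ∑ i ∈ Finset.range (n+1), c^i * D^(n-i) := by
              rw [Finset.mul_sum]
              refine Finset.sum_congr rfl (fun i _ => ?_)
              ring
        _ = D^(n+1) - c^(n+1) := geom_sum_id c D (by rw [hD]; ring) n
        _ ≤ D^(n+1) := by nlinarith [pow_nonneg (by linarith : (0:ℝ) ≤ c) (n+1)]
  refine ⟨D, hD1, fun n => le_trans (key n) (pow_le_pow_right₀ hD1 (by omega))⟩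

lemma pii_cform {β : ℂ} {g : ℂ⟦X⟧} :
    Pii β g ↔ g = 1 + X^3*(C 9 * dd (dd g)) + X^2*(C 18 * dd g) + X*(C 2 * g)
      - X*(C (2*β) * g^3) := by
  rw [Pii]
  have c9 : C (9:ℂ) = (9:ℂ⟦X⟧) := map_ofNat _ 9
  have c18 : C (18:ℂ) = (18:ℂ⟦X⟧) := map_ofNat _ 18
  have c2 : C (2:ℂ) = (2:ℂ⟦X⟧) := map_ofNat _ 2
  have c2b : C (2*β) = 2 * C β := by rw [map_mul, c2]
  rw [c9, c18, c2, c2b]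
  constructor <;> intro h <;> linear_combination h

lemma coeff_cube (p : ℂ⟦X⟧) (m : ℕ) :
    coeff m (p^3) = ∑ k ∈ Finset.range (m+1), ∑ l ∈ Finset.range (m+1-k),
      coeff k p * coeff l p * coeff (m-k-l) p := by
  rw [show p^3 = p*(p*p) by ring, coeff_mul, Finset.Nat.sum_antidiagonal_eq_sum_range_succ_mk]
  refine Finset.sum_congr rfl (fun k hk => ?_)
  have hk' : k ≤ m := Nat.lt_succ_iff.mp (Finset.mem_range.mp hk)
  rw [coeff_mul, Finset.Nat.sum_antidiagonal_eq_sum_range_succ_mk, Finset.mul_sum,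
    show m+1-k = m-k+1 by omega]
  exact Finset.sum_congr rfl (fun l hl => by ring)

lemma pii_unique {β : ℂ} {g h : ℂ⟦X⟧} (hg : Pii β g) (hh : Pii β h) : g = h := by
  rw [pii_cform] at hg hh
  have hw : g - h = X^3*(C 9 * (dd (dd g) - dd (dd h))) + X^2*(C 18 * (dd g - dd h))
      + X*(C 2 * (g-h)) - X*(C (2*β) * ((g-h)*(g^2+g*h+h^2))) := by
    linear_combination hg - hh
  ext n
  induction n using Nat.strong_induction_on with
  | _ n ih =>
    have hcn := congrArg (coeff n) hw
    suffices hs : coeff n (g-h) = 0 by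
      rw [map_sub, sub_eq_zero] at hs; exact hs
    rw [hcn]
    match n with
    | 0 => simp
    | (m+1 : ℕ) =>
      have t1 : coeff (m+1) (X^3*(C 9 * (dd (dd g) - dd (dd h)))) = 0 := by
        rw [coeff_X_pow_mul']
        split_ifs with h3
        · have hM : m+1-3+1+1 = m := by omega
          rw [coeff_C_mul, map_sub, coeff_derivative, coeff_derivative, coeff_derivative,
            coeff_derivative, hM, ih m (by omega)]
          ring
        · rfl
      have t2 : coeff (m+1) (X^2*(C 18 * (dd g - dd h))) = 0 := by
        rw [coeff_X_pow_mul']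
        split_ifs with h2
        · have hM : m+1-2+1 = m := by omega
          rw [coeff_C_mul, map_sub, coeff_derivative, coeff_derivative, hM, ih m (by omega)]
          ring
        · rfl
      have t3 : coeff (m+1) (X*(C 2 * (g-h))) = 0 := by
        rw [coeff_succ_X_mul, coeff_C_mul, map_sub, ih m (by omega)]
        ring
      have t4 : coeff (m+1) (X*(C (2*β) * ((g-h)*(g^2+g*h+h^2)))) = 0 := by
        rw [coeff_succ_X_mul, coeff_C_mul, coeff_mul]
        rw [Finset.sum_eq_zero, mul_zero]
        intro p hp
        have hp1 : p.1 ≤ m := by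
          have := Finset.HasAntidiagonal.mem_antidiagonal.mp hp
          omega
        rw [map_sub, ih p.1 (by omega), sub_self, zero_mul]
      rw [map_sub, map_add, map_add, t1, t2, t3, t4]
      ring
lemma coeff_cube_mk (a : ℕ → ℂ) (m : ℕ) :
    coeff m ((mk a)^3) = ∑ k ∈ Finset.range (m+1), ∑ l ∈ Finset.range (m+1-k),
      a k * a l * a (m-k-l) := by
  rw [coeff_cube]
  exact Finset.sum_congr rfl fun k _ => Finset.sum_congr rfl fun l _ => by
    rw [coeff_mk, coeff_mk, coeff_mk]

lemma pii_mk (β : ℂ) (a : ℕ → ℂ) (ha0 : a 0 = 1)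
    (harec : ∀ n : ℕ, a (n + 1) =
      (3 * (n : ℂ) + 1) * (3 * (n : ℂ) + 2) * a n -
        2 * β * ∑ k ∈ Finset.range (n + 1), ∑ l ∈ Finset.range (n + 1 - k),
          a k * a l * a (n - k - l)) :
    Pii β (mk a) := by
  rw [pii_cform]
  ext n
  match n with
  | 0 =>
    simp [ha0]
  | 1 =>
    rw [coeff_mk, map_sub, map_add, map_add, map_add]
    simp only [coeff_X_pow_mul', coeff_succ_X_mul, coeff_C_mul, coeff_derivative, coeff_one,
      coeff_mk, coeff_cube_mk]
    rw [harec 0]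
    norm_num [ha0]
  | 2 =>
    rw [coeff_mk, map_sub, map_add, map_add, map_add]
    simp only [coeff_X_pow_mul', coeff_succ_X_mul, coeff_C_mul, coeff_derivative, coeff_one,
      coeff_mk, coeff_cube_mk]
    rw [harec 1]
    norm_num
    ring
  | (m+3) =>
    rw [coeff_mk, map_sub, map_add, map_add, map_add]
    simp only [coeff_X_pow_mul', coeff_succ_X_mul, coeff_C_mul, coeff_derivative, coeff_one,
      coeff_mk, coeff_cube_mk]
    rw [if_pos (show (3:ℕ) ≤ m+3 by omega), if_pos (show (2:ℕ) ≤ m+3 by omega)]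
    rw [show m+3-3 = m from by omega, show m+3-2 = m+1 from by omega]
    rw [show m+2+1 = m+3 from rfl, harec (m+2)]
    have : m+3 = m+2+1 := rfl
    push_cast
    ring

lemma geo_two : Geo (2 : ℂ⟦X⟧) := by rw [← map_ofNat C 2]; exact geo_C 2
lemma geo_six : Geo (6 : ℂ⟦X⟧) := by rw [← map_ofNat C 6]; exact geo_C 6

lemma geo_Wser (α : ℂ) {g} (hg : Geo g) : Geo (Wser α g) := by
  rw [Wser]
  refine geo_add (geo_add (geo_add geo_one ?_) ?_) ?_
  · exact geo_mul geo_two (geo_mul (geo_C α) (geo_mul geo_X hg))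
  · refine geo_mul geo_six (geo_mul (geo_C α) (geo_mul ?_ (geo_deriv hg)))
    rw [pow_two]; exact geo_mul geo_X geo_X
  · refine geo_mul geo_two (geo_mul ?_ (geo_mul geo_X ?_))
    · rw [pow_two]; exact geo_mul (geo_C α) (geo_C α)
    · rw [pow_two]; exact geo_mul hg hg

lemma geo_bTrans (α : ℂ) {g} (hg : Geo g) : Geo (bTrans α g) := by
  rw [bTrans]
  refine geo_mul (geo_C _) (geo_sub (geo_mul ?_ ?_) (geo_mul (geo_C _) hg))
  · exact geo_add (geo_mul geo_two (geo_C α)) geo_one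
  · exact geo_inv (constantCoeff_Wser α g) (geo_Wser α hg)

lemma exists_sol : ∀ n : ℕ, ∃ g, Pii (((n+1 : ℕ) : ℂ)^2) g ∧ Geo g := by
  intro n
  induction n with
  | zero =>
    refine ⟨1, ?_, geo_one⟩
    rw [Pii]
    rw [show C ((((0:ℕ)+1 : ℕ) : ℂ)^2) = 1 by norm_num]
    simp only [Derivation.map_one_eq_zero, map_zero, mul_zero, one_pow, mul_one]
    ring
  | succ k ih =>
    obtain ⟨g, hP, hG⟩ := ih
    have hα : ((k+1 : ℕ) : ℂ) + 1 ≠ 0 := by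
      rw [show (((k+1:ℕ):ℂ)+1) = ((k+2:ℕ):ℂ) by push_cast; ring]
      exact Nat.cast_ne_zero.mpr (by omega)
    have hb := backlund ((k+1 : ℕ) : ℂ) hα g hP
    refine ⟨bTrans ((k+1 : ℕ) : ℂ) g, ?_, geo_bTrans _ hG⟩
    convert hb using 2
    push_cast
    ring

end
end PW

/-- for nonzero integer `α`, the coefficients of the asymptotic series of
the (rational) degenerate second Painlevé transcendent grow at most exponentially. -/
theorem painleveII_coefficients_integer_alpha (α : ℤ) (hα0 : α ≠ 0)
    (a : ℕ → ℂ) (ha0 : a 0 = 1)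
    (harec : ∀ n : ℕ, a (n + 1) =
      (3 * (n : ℂ) + 1) * (3 * (n : ℂ) + 2) * a n -
        2 * (α : ℂ) ^ 2 * ∑ k ∈ Finset.range (n + 1), ∑ l ∈ Finset.range (n + 1 - k),
          a k * a l * a (n - k - l)) :
    ∃ C > (1 : ℝ), ∀ N : ℕ, ‖a N‖ ≤ C ^ N := by
  classical
  set m := α.natAbs with hm
  have hm1 : 1 ≤ m := by
    have := Int.natAbs_pos.mpr hα0
    omega
  obtain ⟨g, hP, hG⟩ := PW.exists_sol (m-1)
  rw [show m-1+1 = m from by omega] at hP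
  have hPmk : PW.Pii ((α:ℂ)^2) (PowerSeries.mk a) := PW.pii_mk _ a ha0 harec
  have hβ : ((m : ℕ) : ℂ)^2 = (α:ℂ)^2 := by
    rw [hm]
    have h : ((α.natAbs : ℕ) : ℤ) ^ 2 = α ^ 2 := by exact_mod_cast Int.natAbs_sq α
    rw [show ((α.natAbs : ℕ) : ℂ) = (((α.natAbs : ℕ) : ℤ) : ℂ) from (Int.cast_natCast _).symm,
      ← Int.cast_pow, h, Int.cast_pow]
  rw [hβ] at hP
  have hEq : PowerSeries.mk a = g := PW.pii_unique hPmk hP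
  obtain ⟨c, hc, hcb⟩ := hG
  refine ⟨max 2 (c^2), lt_of_lt_of_le one_lt_two (le_max_left _ _), fun N => ?_⟩
  have hcoeff : a N = PowerSeries.coeff N (PowerSeries.mk a) := (PowerSeries.coeff_mk _ _).symm
  rw [hcoeff, hEq]
  match N with
  | 0 =>
    rw [← hEq, PowerSeries.coeff_mk, ha0]
    simp
  | (n+1) =>
    calc ‖PowerSeries.coeff (n+1) g‖ ≤ c^(n+2) := hcb (n+1)
    _ ≤ (c^2)^(n+1) := by rw [← pow_mul]; exact pow_le_pow_right₀ hc (by omega)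
    _ ≤ (max 2 (c^2))^(n+1) := pow_le_pow_left₀ (by positivity) (le_max_right _ _) _
end

section
/- Let α ∈ ℂ with cos(πα) ≠ 0, and let s₁, s₃ ∈ ℂ satisfy s₁ + s₃ = −2·sin(πα). Define the 2×2 complex matrices S₁ = [[1, 0], [s₁, 1]], S₃ = [[1, 0], [s₃, 1]], σ₂ = [[0, −i], [i, 0]], and M = i·e^{iπα·σ₃}·σ₁ = [[0, i·e^{iπα}], [i·e^{−iπα}, 0]]. Then a 2×2 complex matrix E with det E = 1 satisfies the connection relation E·S₁·S₃ = σ₂·M^{−1}·E·σ₂ if and only if there exist p, q ∈ ℂ with p·q = −1/(2i·cos(πα)) such that E = [[p, 0], [0, q]] · [[1, i·e^{−iπα}], [1, −i·e^{iπα}]]. -/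
open Complex Matrix

/-- characterization of the connection matrix of the degenerate (s₂ = 0)
Riemann–Hilbert problem for P2. With `S₁ = [[1,0],[s₁,1]]`, `S₃ = [[1,0],[s₃,1]]`,
`σ₂ = [[0,−i],[i,0]]`, `M = [[0, i·e^{iπα}],[i·e^{−iπα}, 0]]`, and
`s₁ + s₃ = −2 sin(πα)`, a unimodular matrix `E` satisfies `E·S₁·S₃ = σ₂·M⁻¹·E·σ₂`
iff `E = [[p,0],[0,q]]·[[1, i·e^{−iπα}],[1, −i·e^{iπα}]]` with
`p·q = −1/(2i·cos(πα))`. -/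
theorem painleveII_connection_matrix (α : ℂ)
    (hcos : Complex.cos ((Real.pi : ℂ) * α) ≠ 0)
    (s₁ s₃ : ℂ) (hs : s₁ + s₃ = -2 * Complex.sin ((Real.pi : ℂ) * α))
    (E : Matrix (Fin 2) (Fin 2) ℂ) (hE : E.det = 1) :
    (E * !![(1 : ℂ), 0; s₁, 1] * !![(1 : ℂ), 0; s₃, 1] =
        !![(0 : ℂ), -Complex.I; Complex.I, 0] *
          (!![(0 : ℂ), Complex.I * Complex.exp (Complex.I * (Real.pi : ℂ) * α);
              Complex.I * Complex.exp (-(Complex.I * (Real.pi : ℂ) * α)), 0])⁻¹ *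
          E * !![(0 : ℂ), -Complex.I; Complex.I, 0]) ↔
      ∃ p q : ℂ, p * q = -1 / (2 * Complex.I * Complex.cos ((Real.pi : ℂ) * α)) ∧
        E = !![p, 0; 0, q] *
          !![(1 : ℂ), Complex.I * Complex.exp (-(Complex.I * (Real.pi : ℂ) * α));
             1, -Complex.I * Complex.exp (Complex.I * (Real.pi : ℂ) * α)] := by
  set eP := Complex.exp (Complex.I * (Real.pi : ℂ) * α) with heP
  set eM := Complex.exp (-(Complex.I * (Real.pi : ℂ) * α)) with heM
  have hPM : eP * eM = 1 := by
    rw [heP, heM, ← Complex.exp_add, add_neg_cancel, Complex.exp_zero]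
  have hMP : eM * eP = 1 := by rw [mul_comm]; exact hPM
  -- inverse of M
  have hinv : (!![(0 : ℂ), Complex.I * eP; Complex.I * eM, 0])⁻¹ =
      !![(0 : ℂ), -Complex.I * eP; -Complex.I * eM, 0] := by
    apply inv_eq_right_inv
    rw [Matrix.mul_fin_two, Matrix.one_fin_two]
    congr 1 <;> ring_nf <;>
      simp [Complex.I_sq, hPM, hMP] <;> ring_nf <;>
      rw [mul_comm eM eP, hPM] <;> ring
  -- sin and cos in exponential form
  have hsin : Complex.sin ((Real.pi : ℂ) * α) = (eP - eM) / (2 * Complex.I) := by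
    rw [Complex.sin, heP, heM]; ring_nf; rw [Complex.inv_I]; ring
  have hcosE : Complex.cos ((Real.pi : ℂ) * α) = (eP + eM) / 2 := by
    rw [Complex.cos, heP, heM]; ring_nf
  have hsin2 : 2 * Complex.I * Complex.sin ((Real.pi : ℂ) * α) = eP - eM := by
    rw [Complex.sin, heP, heM]; ring_nf
    linear_combination (Complex.exp (-(Complex.I * (Real.pi : ℂ) * α)) -
      Complex.exp (Complex.I * (Real.pi : ℂ) * α)) * Complex.I_sq
  -- eta-expand E
  have hEeta : E = !![E 0 0, E 0 1; E 1 0, E 1 1] := by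
    ext i j; fin_cases i <;> fin_cases j <;> rfl
  rw [hinv]
  constructor
  · intro h
    rw [hEeta] at h
    rw [Matrix.mul_fin_two, Matrix.mul_fin_two, Matrix.mul_fin_two,
        Matrix.mul_fin_two, Matrix.mul_fin_two] at h
    have h01 : E 0 1 = Complex.I * eM * E 0 0 := by
      have := congrArg (fun A : Matrix (Fin 2) (Fin 2) ℂ => A 0 1) h
      simp at this
      linear_combination this - Complex.I * eM * E 0 0 * Complex.I_sq
    have h11 : E 1 1 = -Complex.I * eP * E 1 0 := by
      have := congrArg (fun A : Matrix (Fin 2) (Fin 2) ℂ => A 1 1) h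
      simp at this
      linear_combination this + Complex.I * eP * E 1 0 * Complex.I_sq
    refine ⟨E 0 0, E 1 0, ?_, ?_⟩
    · have hdet : E.det = E 0 0 * E 1 1 - E 0 1 * E 1 0 := by
        rw [hEeta, Matrix.det_fin_two_of]
        simp
      rw [hE] at hdet
      have hc : 2 * Complex.I * Complex.cos ((Real.pi : ℂ) * α) ≠ 0 := by
        simp [Complex.I_ne_zero, hcos]
      field_simp
      rw [hcosE]
      linear_combination hdet + E 0 0 * h11 - E 1 0 * h01
    · rw [Matrix.mul_fin_two]
      rw [hEeta]
      congr 1 <;> simp [h01, h11] <;> ring_nf <;> simp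
  · rintro ⟨p, q, hpq, rfl⟩
    have hc : 2 * Complex.I * Complex.cos ((Real.pi : ℂ) * α) ≠ 0 := by
      simp [Complex.I_ne_zero, hcos]
    have hs' : s₃ = -2 * Complex.sin ((Real.pi : ℂ) * α) - s₁ := by
      linear_combination hs
    rw [Matrix.mul_fin_two, Matrix.mul_fin_two, Matrix.mul_fin_two,
        Matrix.mul_fin_two, Matrix.mul_fin_two, Matrix.mul_fin_two]
    ext i j
    fin_cases i <;> fin_cases j <;> simp
    · linear_combination p * Complex.I * eM * hs - p * eM * hsin2 - p * hPM -
        p * eM ^ 2 * (Complex.I ^ 2 - 1) * Complex.I_sq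
    · linear_combination p * Complex.I * eM * Complex.I_sq
    · linear_combination -q * Complex.I * eP * hs + q * eP * hsin2 - q * hPM -
        q * eP ^ 2 * (Complex.I ^ 2 - 1) * Complex.I_sq
    · linear_combination -q * Complex.I * eP * Complex.I_sq
end
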